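/- Let U, V be Hilbert spaces, b : U × V → ℝ a bounded bilinear form with ‖b‖ ≤ C satisfying the inf-sup condition with constant c > 0, let T : U → V be the trial-to-test operator defined by ⟨Tu, v⟩_V = b(u, v) for all v ∈ V, and U_h ⊆ U a finite-dimensional subspace. If u ∈ U satisfies b(u, v) = F(v) for all v ∈ V and u_h ∈ U_h satisfies b(u_h, T δu) = F(T δu) for all δu ∈ U_h, then u_h is the minimizer over U_h of w ↦ ‖B w - F‖_{V'} (where B : U → V' is induced by b), and ‖u - u_h‖_U ≤ (C/c) inf_{w∈U_h} ‖u - w‖_U. -/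
import Mathlib


open RealInnerProductSpace

/-- DPG with optimal test functions equals minimum residual minimization:
with trial-to-test operator T (⟪Tu, v⟫ = b(u,v)), Riesz representative vF of F,
and discrete solution u_h of the DPG equations, u_h minimizes ‖Tw - vF‖ over
U_h and satisfies the quasi-optimal estimate ‖u - u_h‖ ≤ (C/c)‖u - w‖. -/
theorem stmt_17
    {U V : Type*} [NormedAddCommGroup U] [InnerProductSpace ℝ U] [CompleteSpace U]
    [NormedAddCommGroup V] [InnerProductSpace ℝ V] [CompleteSpace V]
    (b : U →ₗ[ℝ] V →ₗ[ℝ] ℝ) (C c : ℝ) (hC : 0 < C) (hc : 0 < c)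
    (hbound : ∀ (u : U) (v : V), |b u v| ≤ C * ‖u‖ * ‖v‖)
    (T : U →ₗ[ℝ] V) (hT : ∀ (u : U) (v : V), ⟪T u, v⟫ = b u v)
    (hinfsup : ∀ u : U, c * ‖u‖ ≤ ‖T u‖)
    (Uh : Submodule ℝ U) [FiniteDimensional ℝ Uh]
    (vF : V) (u : U) (hu : ∀ v : V, b u v = ⟪vF, v⟫)
    (u_h : U) (hmem : u_h ∈ Uh)
    (hdisc : ∀ δu ∈ Uh, b u_h (T δu) = ⟪vF, T δu⟫) :
    (∀ w ∈ Uh, ‖T u_h - vF‖ ≤ ‖T w - vF‖) ∧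
      ∀ w ∈ Uh, ‖u - u_h‖ ≤ (C / c) * ‖u - w‖ := by
  -- T u = vF
  have hTu : T u = vF := by
    apply ext_inner_right ℝ
    intro v
    rw [hT, hu]
  -- ‖T x‖ ≤ C * ‖x‖
  have hTbound : ∀ x : U, ‖T x‖ ≤ C * ‖x‖ := by
    intro x
    rcases eq_or_ne (T x) 0 with h | h
    · rw [h, norm_zero]; positivity
    · have h1 : ‖T x‖ * ‖T x‖ ≤ (C * ‖x‖) * ‖T x‖ := by
        have := hbound x (T x)
        calc ‖T x‖ * ‖T x‖ = ⟪T x, T x⟫ := (real_inner_self_eq_norm_mul_norm (T x)).symm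
          _ = b x (T x) := hT x (T x)
          _ ≤ |b x (T x)| := le_abs_self _
          _ ≤ C * ‖x‖ * ‖T x‖ := this
      exact le_of_mul_le_mul_right h1 (norm_pos_iff.mpr h)
  -- orthogonality
  have horth : ∀ δu ∈ Uh, ⟪T u_h - vF, T δu⟫ = 0 := by
    intro δu hδ
    rw [inner_sub_left, hT, hdisc δu hδ, sub_self]
  -- minimality
  have hmin : ∀ w ∈ Uh, ‖T u_h - vF‖ ≤ ‖T w - vF‖ := by
    intro w hw
    have hdecomp : T w - vF = (T u_h - vF) + T (w - u_h) := by
      rw [map_sub]; abel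
    have hperp : ⟪T u_h - vF, T (w - u_h)⟫ = 0 :=
      horth _ (Uh.sub_mem hw hmem)
    have := norm_add_sq_real (T u_h - vF) (T (w - u_h))
    rw [hperp] at this
    have hsq : ‖T w - vF‖ ^ 2 = ‖T u_h - vF‖ ^ 2 + ‖T (w - u_h)‖ ^ 2 := by
      rw [hdecomp, this]; ring
    nlinarith [sq_nonneg ‖T (w - u_h)‖, norm_nonneg (T w - vF), norm_nonneg (T u_h - vF)]
  refine ⟨hmin, fun w hw => ?_⟩
  have h1 : c * ‖u - u_h‖ ≤ ‖T (u - u_h)‖ := hinfsup _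
  have h2 : ‖T (u - u_h)‖ = ‖T u_h - vF‖ := by
    rw [map_sub, hTu, norm_sub_rev]
  have h3 : ‖T w - vF‖ = ‖T (u - w)‖ := by
    rw [map_sub, hTu, norm_sub_rev]
  have h4 : ‖T (u - w)‖ ≤ C * ‖u - w‖ := hTbound _
  have : c * ‖u - u_h‖ ≤ C * ‖u - w‖ := by
    calc c * ‖u - u_h‖ ≤ ‖T u_h - vF‖ := h2 ▸ h1
      _ ≤ ‖T w - vF‖ := hmin w hw
      _ = ‖T (u - w)‖ := h3
      _ ≤ C * ‖u - w‖ := h4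
  rw [div_mul_eq_mul_div, le_div_iff₀ hc, mul_comm]
  linarith
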